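/- Let d ≥ 1, λ₁ ≠ 0, z ∈ ℝ^d, and set f_z(ω) = cos(⟨ω, z⟩) and Q = Q^{(1,d)}(f_z). If ω ∼ γ_d, then E_ω[(M^{(1,d)}(f_z, ω))²] = 1 + ((d+2)/d)·(Q − 1)² + 2(Q − 1). In particular this value does not depend on λ₁ except through Q. -/

import Mathlib

open scoped ENNReal NNReal


open MeasureTheory ProbabilityTheory Real
open scoped RealInnerProductSpace

/-- The standard Gaussian measure `N(0, I_d)` on `ℝ^d`,
the `d`-fold product of the standard normal distribution. -/
noncomputable def stdGaussian (d : ℕ) : Measure (EuclideanSpace ℝ (Fin d)) :=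
  (Measure.pi fun _ : Fin d => gaussianReal 0 1).map (MeasurableEquiv.toLp 2 (Fin d → ℝ))

/-- The third-degree fully symmetric interpolatory rule with generator `l ≠ 0`:
`Q^{(1,d)}(f) = (1 - d/l²)·f(0) + (1/(2l²))·∑ᵢ [f(l eᵢ) + f(-l eᵢ)]`. -/
noncomputable def Q1 (d : ℕ) (l : ℝ) (f : EuclideanSpace ℝ (Fin d) → ℝ) : ℝ :=
  (1 - d / l ^ 2) * f 0
    + (1 / (2 * l ^ 2)) * ∑ i : Fin d,
        (f (EuclideanSpace.single i l) + f (-EuclideanSpace.single i l))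

/-- The randomized third-degree rule `M^{(1,d)}(f, ω)` with random weights
`ã₀(ω) = 1 - (∑ᵢ ωᵢ²)/l²` and `ã₁(ω) = (∑ᵢ ωᵢ²)/(2dl²)`. -/
noncomputable def M1 (d : ℕ) (l : ℝ) (f : EuclideanSpace ℝ (Fin d) → ℝ)
    (ω : EuclideanSpace ℝ (Fin d)) : ℝ :=
  (1 - (∑ i, ω i ^ 2) / l ^ 2) * f 0
    + ((∑ i, ω i ^ 2) / (2 * d * l ^ 2)) * ∑ i : Fin d,
        (f (EuclideanSpace.single i l) + f (-EuclideanSpace.single i l))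


lemma aux_integrable_vol (n : ℕ) :
    Integrable (fun x : ℝ => x ^ n * Real.exp (-x ^ 2 / 2)) := by
  have h := integrable_rpow_mul_exp_neg_mul_sq (b := 1/2) (by norm_num) (s := n)
    (by exact_mod_cast lt_of_lt_of_le neg_one_lt_zero (Nat.cast_nonneg n))
  have he : (fun x : ℝ => x ^ (n : ℝ) * Real.exp (-(1/2) * x ^ 2))
      = fun x : ℝ => x ^ n * Real.exp (-x ^ 2 / 2) := by
    ext x
    rw [Real.rpow_natCast]
    ring_nf
  rwa [he] at h

lemma aux_step (n : ℕ) : ∫ x : ℝ, x ^ (n + 2) * Real.exp (-x ^ 2 / 2)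
    = (n + 1) * ∫ x : ℝ, x ^ n * Real.exp (-x ^ 2 / 2) := by
  have hf : ∀ x : ℝ, HasDerivAt (fun x : ℝ => -(x ^ (n + 1) * Real.exp (-x ^ 2 / 2)))
      (x ^ (n + 2) * Real.exp (-x ^ 2 / 2) - (n + 1) * (x ^ n * Real.exp (-x ^ 2 / 2))) x := by
    intro x
    have h1 : HasDerivAt (fun x : ℝ => x ^ (n + 1)) ((n + 1) * x ^ n) x := by
      simpa using hasDerivAt_pow (n + 1) x
    have h0 : HasDerivAt (fun x : ℝ => -x ^ 2 / 2) (-x) x := by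
      have := (hasDerivAt_pow 2 x).neg.div_const 2
      exact this.congr_deriv (by push_cast; ring)
    have h2 : HasDerivAt (fun x : ℝ => Real.exp (-x ^ 2 / 2))
        (Real.exp (-x ^ 2 / 2) * -x) x := h0.exp
    have := (h1.mul h2).neg
    exact this.congr_deriv (by push_cast; ring)
  have hint : Integrable (fun x : ℝ => x ^ (n + 2) * Real.exp (-x ^ 2 / 2)
      - (n + 1) * (x ^ n * Real.exp (-x ^ 2 / 2))) :=
    (aux_integrable_vol (n + 2)).sub ((aux_integrable_vol n).const_mul _)
  have h0 := integral_eq_zero_of_hasDerivAt_of_integrable hf hint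
    ((aux_integrable_vol (n + 1)).neg)
  rw [integral_sub (aux_integrable_vol (n + 2)) ((aux_integrable_vol n).const_mul _),
    integral_const_mul] at h0
  linarith

lemma aux_exp : ∫ x : ℝ, Real.exp (-x ^ 2 / 2) = Real.sqrt (2 * π) := by
  have h := integral_gaussian (1/2)
  rw [show π / (1/2) = 2 * π by ring] at h
  have he : (fun x : ℝ => Real.exp (-(1/2) * x ^ 2))
      = fun x : ℝ => Real.exp (-x ^ 2 / 2) := by
    ext x; ring_nf
  rwa [he] at h

lemma pdf01 (x : ℝ) : gaussianPDFReal 0 1 x = (Real.sqrt (2 * π))⁻¹ * Real.exp (-x ^ 2 / 2) := by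
  simp [gaussianPDFReal]

lemma gauss_int (g : ℝ → ℝ) : ∫ x, g x ∂(gaussianReal 0 1)
    = (Real.sqrt (2 * π))⁻¹ * ∫ x : ℝ, g x * Real.exp (-x ^ 2 / 2) := by
  rw [gaussianReal_of_var_ne_zero 0 one_ne_zero]
  have : (volume : Measure ℝ).withDensity (gaussianPDF 0 1)
      = (volume : Measure ℝ).withDensity (fun x => ((gaussianPDFReal 0 1 x).toNNReal : ℝ≥0∞)) :=
    rfl
  rw [this, integral_withDensity_eq_integral_smul
    ((measurable_gaussianPDFReal 0 1).real_toNNReal) g]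
  rw [← integral_const_mul]
  congr 1
  ext x
  rw [NNReal.smul_def, smul_eq_mul, Real.coe_toNNReal _ (gaussianPDFReal_nonneg 0 1 x), pdf01]
  ring

lemma gauss_pow_int (n : ℕ) : ∫ x, x ^ n ∂(gaussianReal 0 1)
    = (Real.sqrt (2 * π))⁻¹ * ∫ x : ℝ, x ^ n * Real.exp (-x ^ 2 / 2) :=
  gauss_int _

lemma sqrt2pi_pos : (0:ℝ) < Real.sqrt (2 * π) := Real.sqrt_pos.mpr (by positivity)

lemma gauss_m0 : ∫ x, x ^ 0 ∂(gaussianReal 0 1) = 1 := by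
  rw [gauss_pow_int]
  simp_rw [pow_zero, one_mul]
  rw [aux_exp, inv_mul_cancel₀ sqrt2pi_pos.ne']

lemma gauss_m2 : ∫ x, x ^ 2 ∂(gaussianReal 0 1) = 1 := by
  rw [gauss_pow_int, show (2:ℕ) = 0 + 2 from rfl, aux_step 0]
  simp_rw [pow_zero, one_mul]
  rw [aux_exp]
  push_cast
  rw [zero_add, one_mul, inv_mul_cancel₀ sqrt2pi_pos.ne']

lemma gauss_m4 : ∫ x, x ^ 4 ∂(gaussianReal 0 1) = 3 := by
  rw [gauss_pow_int, show (4:ℕ) = 2 + 2 from rfl, aux_step 2, (aux_step 0 : ∫ x : ℝ, x ^ 2 * Real.exp (-x ^ 2 / 2) = ((0:ℕ) + 1) * ∫ x : ℝ, x ^ 0 * Real.exp (-x ^ 2 / 2))]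
  simp_rw [pow_zero, one_mul]
  rw [aux_exp]
  push_cast
  rw [zero_add, one_mul, show (2:ℝ) + 1 = 3 by norm_num, mul_comm (3:ℝ), ← mul_assoc,
    inv_mul_cancel₀ sqrt2pi_pos.ne', one_mul]

lemma gauss_integrable_pow (n : ℕ) : Integrable (fun x : ℝ => x ^ n) (gaussianReal 0 1) := by
  rw [gaussianReal_of_var_ne_zero 0 one_ne_zero]
  rw [integrable_withDensity_iff (measurable_gaussianPDF 0 1)
    (ae_of_all _ fun x => ENNReal.ofReal_lt_top)]
  have : (fun x : ℝ => x ^ n * (gaussianPDF 0 1 x).toReal)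
      = fun x : ℝ => (Real.sqrt (2 * π))⁻¹ * (x ^ n * Real.exp (-x ^ 2 / 2)) := by
    ext x
    rw [gaussianPDF, ENNReal.toReal_ofReal (gaussianPDFReal_nonneg 0 1 x), pdf01]
    ring
  rw [this]
  exact (aux_integrable_vol n).const_mul _


lemma std_integral_prod {d : ℕ} (f : Fin d → ℝ → ℝ) :
    ∫ ω : EuclideanSpace ℝ (Fin d), ∏ i, f i (ω i) ∂(stdGaussian d)
      = ∏ i, ∫ x, f i x ∂(gaussianReal 0 1) := by
  rw [_root_.stdGaussian, integral_map_equiv]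
  exact MeasureTheory.integral_fintype_prod_eq_prod (f := f)

lemma std_integrable_prod {d : ℕ} (f : Fin d → ℝ → ℝ)
    (hf : ∀ i, Integrable (f i) (gaussianReal 0 1)) :
    Integrable (fun ω : EuclideanSpace ℝ (Fin d) => ∏ i, f i (ω i)) (stdGaussian d) := by
  rw [_root_.stdGaussian, integrable_map_equiv]
  exact MeasureTheory.Integrable.fintype_prod (f := f) hf


lemma rep2 {d : ℕ} (i : Fin d) :
    (fun ω : EuclideanSpace ℝ (Fin d) => (ω i) ^ 2)
      = fun ω : EuclideanSpace ℝ (Fin d) =>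
          ∏ k, (fun k (x : ℝ) => if k = i then x ^ 2 else 1) k (ω k) := by
  ext ω
  simp [Finset.prod_ite_eq']

lemma rep22 {d : ℕ} (i j : Fin d) :
    (fun ω : EuclideanSpace ℝ (Fin d) => (ω i) ^ 2 * (ω j) ^ 2)
      = fun ω : EuclideanSpace ℝ (Fin d) =>
          ∏ k, (fun k (x : ℝ) =>
            (if k = i then x ^ 2 else 1) * (if k = j then x ^ 2 else 1)) k (ω k) := by
  ext ω
  rw [Finset.prod_mul_distrib]
  simp [Finset.prod_ite_eq']

lemma std_integrable_sq {d : ℕ} (i : Fin d) :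
    Integrable (fun ω : EuclideanSpace ℝ (Fin d) => (ω i) ^ 2) (stdGaussian d) := by
  rw [rep2]
  refine std_integrable_prod (fun k (x : ℝ) => if k = i then x ^ 2 else 1) fun k => ?_
  by_cases h : k = i
  · simpa [h] using gauss_integrable_pow 2
  · simp only [h, if_false]
    exact integrable_const 1

lemma std_integrable_sq_sq {d : ℕ} (i j : Fin d) :
    Integrable (fun ω : EuclideanSpace ℝ (Fin d) => (ω i) ^ 2 * (ω j) ^ 2)
      (stdGaussian d) := by
  rw [rep22]
  refine std_integrable_prod
    (fun k (x : ℝ) => (if k = i then x ^ 2 else 1) * (if k = j then x ^ 2 else 1)) fun k => ?_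
  by_cases hi : k = i <;> by_cases hj : k = j
  · subst hi; subst hj; simpa [← pow_add] using gauss_integrable_pow 4
  · subst hi; simpa [hj] using gauss_integrable_pow 2
  · subst hj; simpa [hi] using gauss_integrable_pow 2
  · simpa [hi, hj] using integrable_const (1:ℝ)

lemma std_m2 {d : ℕ} (i : Fin d) :
    ∫ ω, (ω i : ℝ) ^ 2 ∂(stdGaussian d) = 1 := by
  rw [rep2, std_integral_prod (fun k (x : ℝ) => if k = i then x ^ 2 else 1)]
  have h : ∀ k : Fin d, ∫ x, (if k = i then x ^ 2 else (1 : ℝ)) ∂(gaussianReal 0 1) = 1 := by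
    intro k
    by_cases h : k = i
    · simp only [h, if_pos rfl]
      exact gauss_m2
    · simp [h]
  calc ∏ k : Fin d, ∫ x, (if k = i then x ^ 2 else (1:ℝ)) ∂(gaussianReal 0 1)
      = ∏ _k : Fin d, (1:ℝ) := Finset.prod_congr rfl fun k _ => h k
    _ = 1 := Finset.prod_const_one

lemma std_m22 {d : ℕ} (i j : Fin d) :
    ∫ ω, (ω i : ℝ) ^ 2 * (ω j) ^ 2 ∂(stdGaussian d) = if i = j then 3 else 1 := by
  rw [rep22, std_integral_prod
    (fun k (x : ℝ) => (if k = i then x ^ 2 else 1) * (if k = j then x ^ 2 else 1))]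
  have h : ∀ k : Fin d,
      ∫ x, (if k = i then x ^ 2 else (1:ℝ)) * (if k = j then x ^ 2 else 1) ∂(gaussianReal 0 1)
        = if k = i ∧ k = j then 3 else 1 := by
    intro k
    by_cases hi : k = i <;> by_cases hj : k = j
    · subst hi; subst hj
      simp only [eq_self_iff_true, if_true, and_self, ← pow_add]
      exact gauss_m4
    · subst hi
      simpa [hj] using gauss_m2
    · subst hj
      simpa [hi] using gauss_m2
    · simp [hi, hj]
  rw [Finset.prod_congr rfl fun k _ => h k]
  by_cases hij : i = j
  · subst hij
    simp [Finset.prod_ite_eq']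
  · have : ∀ k : Fin d, (if k = i ∧ k = j then (3:ℝ) else 1) = 1 := by
      intro k
      rw [if_neg]
      rintro ⟨rfl, rfl⟩
      exact hij rfl
    rw [Finset.prod_congr rfl fun k _ => this k, Finset.prod_const_one, if_neg hij]

instance (d : ℕ) : IsProbabilityMeasure (stdGaussian d) :=
  Measure.isProbabilityMeasure_map (MeasurableEquiv.toLp 2 (Fin d → ℝ)).measurable.aemeasurable


/-- second moment of the randomized rule for `f_z(ω) = cos⟨ω, z⟩`:
`E_ω[(M^{(1,d)}(f_z, ω))²] = 1 + ((d+2)/d)·(Q-1)² + 2(Q-1)` with `Q = Q^{(1,d)}(f_z)`. -/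
theorem second_moment_M1 (d : ℕ) (hd : 1 ≤ d) (l : ℝ) (hl : l ≠ 0)
    (z : EuclideanSpace ℝ (Fin d)) :
    ∫ ω, (M1 d l (fun w => Real.cos ⟪w, z⟫) ω) ^ 2 ∂(stdGaussian d)
      = 1 + ((d + 2) / d) * (Q1 d l (fun w => Real.cos ⟪w, z⟫) - 1) ^ 2
          + 2 * (Q1 d l (fun w => Real.cos ⟪w, z⟫) - 1) := by
  have hd0 : (d : ℝ) ≠ 0 := Nat.cast_ne_zero.mpr (by omega)
  have hl2 : (l : ℝ) ^ 2 ≠ 0 := pow_ne_zero 2 hl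
  set f : EuclideanSpace ℝ (Fin d) → ℝ := fun w => Real.cos ⟪w, z⟫ with hf
  set Q := Q1 d l f with hQ
  set c : ℝ := (Q - 1) / d with hc
  have hf0 : f 0 = 1 := by simp [hf]
  have key : ∀ ω : EuclideanSpace ℝ (Fin d),
      M1 d l f ω = 1 + c * ∑ i, ω i ^ 2 := by
    intro ω
    have halg : ∀ S T : ℝ,
        (1 - S / l ^ 2) * 1 + (S / (2 * d * l ^ 2)) * T
          = 1 + (((1 - d / l ^ 2) * 1 + (1 / (2 * l ^ 2)) * T - 1) / d) * S := by
      intro S T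
      field_simp
      ring
    rw [M1, hc, hQ, Q1, hf0]
    exact halg _ _
  have key2 : ∀ ω : EuclideanSpace ℝ (Fin d),
      (M1 d l f ω) ^ 2
        = 1 + (2 * c) * (∑ i, ω i ^ 2)
            + c ^ 2 * ∑ i : Fin d, ∑ j : Fin d, ω i ^ 2 * ω j ^ 2 := by
    intro ω
    have hsq : ∑ i : Fin d, ∑ j : Fin d, (ω i) ^ 2 * (ω j) ^ 2
        = (∑ i, ω i ^ 2) ^ 2 := by
      rw [sq, Finset.sum_mul_sum]
    rw [key ω, hsq]
    ring
  have hS : Integrable (fun ω : EuclideanSpace ℝ (Fin d) => ∑ i, (ω i : ℝ) ^ 2)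
      (stdGaussian d) := integrable_finset_sum _ fun i _ => std_integrable_sq i
  have hSS : Integrable
      (fun ω : EuclideanSpace ℝ (Fin d) => ∑ i : Fin d, ∑ j : Fin d, (ω i : ℝ) ^ 2 * (ω j) ^ 2)
      (stdGaussian d) :=
    integrable_finset_sum _ fun i _ => integrable_finset_sum _ fun j _ => std_integrable_sq_sq i j
  have hint1 : ∫ ω, (∑ i, (ω i : ℝ) ^ 2) ∂(stdGaussian d) = d := by
    rw [integral_finset_sum _ fun i _ => std_integrable_sq i]
    simp [std_m2]
  have hint2 : ∫ ω, (∑ i : Fin d, ∑ j : Fin d, (ω i : ℝ) ^ 2 * (ω j) ^ 2) ∂(stdGaussian d)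
      = d * (d + 2) := by
    rw [integral_finset_sum _ fun i _ =>
      integrable_finset_sum _ fun j _ => std_integrable_sq_sq i j]
    have h1 : ∀ i : Fin d, ∫ ω, (∑ j : Fin d, (ω i : ℝ) ^ 2 * (ω j) ^ 2) ∂(stdGaussian d)
        = (d : ℝ) + 2 := by
      intro i
      rw [integral_finset_sum _ fun j _ => std_integrable_sq_sq i j]
      have h2 : ∀ j : Fin d, ∫ ω, ((ω i : ℝ) ^ 2 * (ω j) ^ 2) ∂(stdGaussian d)
          = (if i = j then (2 : ℝ) else 0) + 1 := by
        intro j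
        rw [std_m22]
        by_cases h : i = j <;> simp [h] <;> norm_num
      rw [Finset.sum_congr rfl fun j _ => h2 j, Finset.sum_add_distrib, Finset.sum_ite_eq,
        Finset.sum_const]
      simp
      ring
    rw [Finset.sum_congr rfl fun i _ => h1 i, Finset.sum_const]
    simp
    ring
  calc ∫ ω, (M1 d l f ω) ^ 2 ∂(stdGaussian d)
      = ∫ ω, (1 + (2 * c) * (∑ i, ω i ^ 2)
          + c ^ 2 * ∑ i : Fin d, ∑ j : Fin d, ω i ^ 2 * ω j ^ 2) ∂(stdGaussian d) :=
        integral_congr_ae (Filter.Eventually.of_forall key2)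
    _ = 1 + (2 * c) * (d : ℝ) + c ^ 2 * ((d : ℝ) * (d + 2)) := by
        have e1 : ∫ ω, (1 + (2 * c) * (∑ i, ω i ^ 2)
              + c ^ 2 * ∑ i : Fin d, ∑ j : Fin d, ω i ^ 2 * ω j ^ 2) ∂(stdGaussian d)
            = (∫ ω, (1 + (2 * c) * (∑ i, (ω i : ℝ) ^ 2)) ∂(stdGaussian d))
              + ∫ ω, (c ^ 2 * ∑ i : Fin d, ∑ j : Fin d, (ω i : ℝ) ^ 2 * ω j ^ 2)
                  ∂(stdGaussian d) :=
          integral_add ((integrable_const (1 : ℝ)).add (hS.const_mul _)) (hSS.const_mul _)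
        have e2 : ∫ ω, (1 + (2 * c) * (∑ i, (ω i : ℝ) ^ 2)) ∂(stdGaussian d)
            = (∫ _ω, (1 : ℝ) ∂(stdGaussian d))
              + ∫ ω, ((2 * c) * ∑ i, (ω i : ℝ) ^ 2) ∂(stdGaussian d) :=
          integral_add (integrable_const (1 : ℝ)) (hS.const_mul _)
        rw [e1, e2, integral_const_mul, integral_const_mul, hint1, hint2, integral_const]
        simp
    _ = 1 + ((d + 2) / d) * (Q - 1) ^ 2 + 2 * (Q - 1) := by
        rw [hc]
        field_simp
        ring
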